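/- Under the hypotheses of the previous lemma, if additionally z̄^W is the unique minimizer of min_{z ∈ B_ε(x)} 𝒯^W_{x,ε}(z), then for any J ∈ 𝒥²₀ f(z̄^W), the optimal value strictly increases: θ^{W∪{J}} > θ^W, where θ^{W∪{J}} := min_{z ∈ B_ε(x)} 𝒯^{W∪{J}}_{x,ε}(z). -/

import Mathlib

open Metric Set Filter Topology

noncomputable section

abbrev Euc (n : ℕ) := EuclideanSpace ℝ (Fin n)

abbrev JetSpace (n : ℕ) :=
  Euc n × ℝ × (Euc n →L[ℝ] ℝ) × (Euc n →L[ℝ] Euc n →L[ℝ] ℝ)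

variable {n : ℕ}

/-- The 4-tuple of coefficients of the second-order Taylor expansion of `f` at `y`. -/
def jetMap (f : Euc n → ℝ) (y : Euc n) : JetSpace n :=
  (y, f y, fderiv ℝ f y, fderiv ℝ (fderiv ℝ f) y)

/-- The second-order ε-jet of `f` at `x`. -/
def jet (f : Euc n → ℝ) (D2 : Set (Euc n)) (ε : ℝ) (x : Euc n) : Set (JetSpace n) :=
  ⋂ δ ∈ Ioi ε, closure (jetMap f '' (closedBall x δ ∩ D2))

/-- The quadratic polynomial associated to a jet element. -/
def Qpoly (j : JetSpace n) (z : Euc n) : ℝ :=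
  j.2.1 + j.2.2.1 (z - j.1) + (1 / 2) * j.2.2.2 (z - j.1) (z - j.1)

/-- The second-order model `𝒯_{x,ε}`. -/
def model (f : Euc n → ℝ) (D2 : Set (Euc n)) (ε : ℝ) (x z : Euc n) : ℝ :=
  sSup ((fun j => Qpoly j z) '' jet f D2 ε x)

/-- `θ(x,ε)`, the optimal value of the model on the closed ε-ball. -/
def theta (f : Euc n → ℝ) (D2 : Set (Euc n)) (ε : ℝ) (x : Euc n) : ℝ :=
  sInf (model f D2 ε x '' closedBall x ε)

/-- The model `𝒯^W_{x,ε}` built from a subset `W` of the jet. -/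
def modelW (W : Set (JetSpace n)) (z : Euc n) : ℝ :=
  sSup ((fun j => Qpoly j z) '' W)

/-- `θ^W(x,ε)`, the optimal value of the finite model on the closed ε-ball. -/
def thetaW (W : Set (JetSpace n)) (ε : ℝ) (x : Euc n) : ℝ :=
  sInf (modelW W '' closedBall x ε)

/-- The Clarke subdifferential of `f` at `y`. -/
def clarke (f : Euc n → ℝ) (y : Euc n) : Set (Euc n →L[ℝ] ℝ) :=
  convexHull ℝ {ξ | ∃ u : ℕ → Euc n, (∀ j, DifferentiableAt ℝ f (u j)) ∧
    Tendsto u atTop (𝓝 y) ∧ Tendsto (fun j => fderiv ℝ f (u j)) atTop (𝓝 ξ)}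

/-- The Goldstein ε-subdifferential of `f` at `x`. -/
def goldstein (f : Euc n → ℝ) (ε : ℝ) (x : Euc n) : Set (Euc n →L[ℝ] ℝ) :=
  convexHull ℝ (⋂ δ ∈ Ioi ε, closure
    {g : Euc n →L[ℝ] ℝ | ∃ y ∈ closedBall x δ, DifferentiableAt ℝ f y ∧ g = fderiv ℝ f y})

/-- The standing assumptions: `f` locally Lipschitz, `D2` the set of points of twice
differentiability, its complement a Lebesgue null set, and Hessians locally bounded. -/
def StandingAssumptions (f : Euc n → ℝ) (D2 : Set (Euc n)) : Prop :=
  LocallyLipschitz f ∧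
  D2 = {y | DifferentiableAt ℝ f y ∧ DifferentiableAt ℝ (fderiv ℝ f) y} ∧
  MeasureTheory.volume D2ᶜ = 0 ∧
  ∀ x : Euc n, ∃ U : Set (Euc n), IsOpen U ∧ x ∈ U ∧
    Bornology.IsBounded ((fun y => fderiv ℝ (fderiv ℝ f) y) '' (U ∩ D2))


lemma continuous_Qpoly (j : JetSpace n) : Continuous (Qpoly j) := by
  have h1 : Continuous fun z : Euc n => z - j.1 := continuous_id.sub continuous_const
  have h2 : Continuous fun p : Euc n × Euc n => j.2.2.2 p.1 p.2 := j.2.2.2.continuous₂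
  exact (continuous_const.add (j.2.2.1.continuous.comp h1)).add
    (continuous_const.mul (h2.comp (h1.prodMk h1)))

lemma continuous_modelW {W : Set (JetSpace n)} (hfin : W.Finite) (hne : W.Nonempty) :
    Continuous (modelW W) := by
  obtain ⟨s, rfl⟩ : ∃ s : Finset (JetSpace n), ↑s = W := ⟨hfin.toFinset, hfin.coe_toFinset⟩
  have hs : s.Nonempty := by simpa [Finset.coe_nonempty] using hne
  have : modelW (↑s : Set (JetSpace n)) = fun z => s.sup' hs (fun j => Qpoly j z) := by
    funext z
    rw [Finset.sup'_eq_csSup_image]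
    rfl
  rw [this, continuous_iff_continuousAt]
  intro z
  exact ContinuousAt.finset_sup'_apply hs fun j _ => (continuous_Qpoly j).continuousAt

lemma jet_zero_fst {f : Euc n → ℝ} {D2 : Set (Euc n)} {zbar : Euc n} {J : JetSpace n}
    (hJ : J ∈ jet f D2 0 zbar) : J.1 = zbar := by
  have h : ∀ δ > (0:ℝ), dist J.1 zbar ≤ δ := by
    intro δ hδ
    have h1 : J ∈ closure (jetMap f '' (closedBall zbar δ ∩ D2)) :=
      mem_iInter₂.1 hJ δ (by simpa using hδ)
    have h2 : J.1 ∈ closure (Prod.fst '' (jetMap f '' (closedBall zbar δ ∩ D2))) :=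
      image_closure_subset_closure_image (f := Prod.fst)
        (s := jetMap f '' (closedBall zbar δ ∩ D2)) continuous_fst (mem_image_of_mem _ h1)
    have h3 : Prod.fst '' (jetMap f '' (closedBall zbar δ ∩ D2)) ⊆ closedBall zbar δ := by
      rintro _ ⟨_, ⟨y, ⟨hy, _⟩, rfl⟩, rfl⟩
      exact hy
    exact (closure_mono h3).trans (closure_closedBall (x := zbar) (ε := δ)).subset h2
  have : dist J.1 zbar ≤ 0 := le_of_forall_pos_le_add (by intro δ hδ; simpa using h δ hδ)
  exact dist_le_zero.1 this

lemma jet_zero_snd {f : Euc n → ℝ} {D2 : Set (Euc n)} {zbar : Euc n} {J : JetSpace n}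
    (hf : Continuous f) (hJ : J ∈ jet f D2 0 zbar) : J.2.1 = f zbar := by
  have h : ∀ η > (0:ℝ), dist J.2.1 (f zbar) ≤ η := by
    intro η hη
    obtain ⟨δ, hδ, hball⟩ := Metric.continuousAt_iff.1 hf.continuousAt η hη
    have hδ2 : (0:ℝ) < δ / 2 := by linarith
    have h1 : J ∈ closure (jetMap f '' (closedBall zbar (δ/2) ∩ D2)) :=
      mem_iInter₂.1 hJ (δ/2) (by simpa using hδ2)
    have h2 : J.2.1 ∈ closure ((fun p : JetSpace n => p.2.1) ''
        (jetMap f '' (closedBall zbar (δ/2) ∩ D2))) :=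
      image_closure_subset_closure_image (f := fun p : JetSpace n => p.2.1)
        (s := jetMap f '' (closedBall zbar (δ/2) ∩ D2))
        (continuous_fst.comp continuous_snd) (mem_image_of_mem _ h1)
    have h3 : (fun p : JetSpace n => p.2.1) '' (jetMap f '' (closedBall zbar (δ/2) ∩ D2)) ⊆
        closedBall (f zbar) η := by
      rintro _ ⟨_, ⟨y, ⟨hy, _⟩, rfl⟩, rfl⟩
      have : dist y zbar < δ := lt_of_le_of_lt (mem_closedBall.1 hy) (by linarith)
      exact mem_closedBall.2 (le_of_lt (hball this))
    exact (closure_mono h3).trans (closure_closedBall).subset h2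
  have : dist J.2.1 (f zbar) ≤ 0 := le_of_forall_pos_le_add (by intro η hη; simpa using h η hη)
  exact dist_le_zero.1 this

theorem enlarged_optimal_value_increases (f : Euc n → ℝ) (D2 : Set (Euc n))
    (hf : StandingAssumptions f D2) (x : Euc n) (ε : ℝ) (hε : 0 ≤ ε)
    (W : Set (JetSpace n)) (hW : W ⊆ jet f D2 ε x) (hfin : W.Finite) (hne : W.Nonempty)
    (c : ℝ) (hc : c ∈ Ioo (0 : ℝ) 1)
    (zbar : Euc n) (hzb : zbar ∈ closedBall x ε)
    (hmin : IsMinOn (modelW W) (closedBall x ε) zbar)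
    (huniq : ∀ z ∈ closedBall x ε, IsMinOn (modelW W) (closedBall x ε) z → z = zbar)
    (hθ : thetaW W ε x ≤ f x)
    (hdec : f zbar > f x + c * (thetaW W ε x - f x))
    (J : JetSpace n) (hJ : J ∈ jet f D2 0 zbar) :
    thetaW W ε x < thetaW (insert J W) ε x := by
  have hfins : (insert J W).Finite := hfin.insert J
  have hnes : (insert J W).Nonempty := insert_nonempty J W
  have hcont := continuous_modelW hfins hnes
  obtain ⟨zs, hzs, hzsmin⟩ := (isCompact_closedBall x ε).exists_isMinOn ⟨zbar, hzb⟩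
    hcont.continuousOn
  have hθins : thetaW (insert J W) ε x = modelW (insert J W) zs :=
    IsLeast.csInf_eq ⟨mem_image_of_mem _ hzs, by rintro _ ⟨z, hz, rfl⟩; exact hzsmin hz⟩
  have hθWeq : thetaW W ε x = modelW W zbar :=
    IsLeast.csInf_eq ⟨mem_image_of_mem _ hzb, by rintro _ ⟨z, hz, rfl⟩; exact hmin hz⟩
  have hmono : ∀ z : Euc n, modelW W z ≤ modelW (insert J W) z := by
    intro z
    exact csSup_le_csSup ((hfins.image _).bddAbove) (hne.image _)
      (image_mono (subset_insert J W))
  have hJ1 : J.1 = zbar := jet_zero_fst hJ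
  have hJ2 : J.2.1 = f zbar := jet_zero_snd hf.1.continuous hJ
  have hQ : Qpoly J zbar = f zbar := by
    simp [Qpoly, hJ1, hJ2, sub_self]
  have hfz : f zbar ≤ modelW (insert J W) zbar := by
    rw [← hQ]
    exact le_csSup ((hfins.image _).bddAbove) (mem_image_of_mem _ (mem_insert J W))
  have hθlt : thetaW W ε x < f zbar := by
    rcases hc with ⟨hc0, hc1⟩
    nlinarith [hθ, hdec]
  by_contra hle
  push_neg at hle
  have h1 : modelW W zs ≤ modelW W zbar := by
    calc modelW W zs ≤ modelW (insert J W) zs := hmono zs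
      _ = thetaW (insert J W) ε x := hθins.symm
      _ ≤ thetaW W ε x := hle
      _ = modelW W zbar := hθWeq
  have hzsIsMin : IsMinOn (modelW W) (closedBall x ε) zs := by
    intro z hz
    exact le_trans h1 (hmin hz)
  have hzseq : zs = zbar := huniq zs hzs hzsIsMin
  have : thetaW (insert J W) ε x = modelW (insert J W) zbar := by rw [hθins, hzseq]
  have : f zbar ≤ thetaW W ε x := le_trans (hfz.trans this.ge) hle
  linarith
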